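/- Let X be a Banach space with subspaces U₀, U₁, V₀, V₁ satisfying the topological decompositions X = U₀ ⊕ U₁ = V₀ ⊕ V₁ = V₀ ⊕ U₁ = U₀ ⊕ V₁. Write π_{A,B} for the projection onto A along B, and let T_{V_i} : U_i → U_{i+1 mod 2} be the bounded operator whose graph is V_i. Then: (1) π_{V₀,U₁} = (1 + T_{V₀}) π_{U₀,U₁}; (2) π_{U₁,V₀} = 1 − π_{V₀,U₁}; and (3) π_{V₀,V₁} = (1 + T_{V₀}) π_{U₀,U₁} (1 + T_{V₁} π_{U₁,V₀})^{−1}. -/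

import Mathlib

/-- A projection sends `x` to `z` iff `z` is in the range and `x - z` in the kernel. -/
theorem proj_apply_eq {X : Type*} [NormedAddCommGroup X] [NormedSpace ℝ X]
    (e : X →L[ℝ] X) (he : IsIdempotentElem e) (x z : X)
    (hz : z ∈ LinearMap.range (e : X →ₗ[ℝ] X)) (hxz : x - z ∈ LinearMap.ker (e : X →ₗ[ℝ] X)) : e x = z := by
  obtain ⟨w, hw⟩ := hz
  have hfix : e z = z := by
    have := DFunLike.congr_fun he w
    simpa [ContinuousLinearMap.mul_apply, ← hw] using this
  have hker : e (x - z) = 0 := hxz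
  have : e x = e (z + (x - z)) := by congr 1; abel
  rw [this, map_add, hfix, hker, add_zero]

/-!
Statement 4 (Lemma `LemmaFredDecomp`(i), projection formulas):
Let `X` be a Banach space with `X = U₀ ⊕ U₁ = V₀ ⊕ V₁ = V₀ ⊕ U₁ = U₀ ⊕ V₁`
(all topological decompositions, realized by continuous idempotents), and let
`T_{V_i} : U_i → U_{i+1}` be the bounded operators whose graphs are the `V_i`.
Then:
(1) `π_{V₀,U₁} = (1 + T_{V₀}) π_{U₀,U₁}`;
(2) `π_{U₁,V₀} = 1 − π_{V₀,U₁}`;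
(3) `π_{V₀,V₁} = (1 + T_{V₀}) π_{U₀,U₁} (1 + T_{V₁} π_{U₁,V₀})⁻¹`.
-/

theorem projection_formulas
    {X : Type*} [NormedAddCommGroup X] [NormedSpace ℝ X] [CompleteSpace X]
    (U₀ U₁ V₀ V₁ : Submodule ℝ X)
    -- π_{U₀,U₁}
    (p : X →L[ℝ] X) (hp : IsIdempotentElem p)
    (hpr : LinearMap.range (p : X →ₗ[ℝ] X) = U₀) (hpk : LinearMap.ker (p : X →ₗ[ℝ] X) = U₁)
    -- π_{V₀,V₁}
    (q : X →L[ℝ] X) (hq : IsIdempotentElem q)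
    (hqr : LinearMap.range (q : X →ₗ[ℝ] X) = V₀) (hqk : LinearMap.ker (q : X →ₗ[ℝ] X) = V₁)
    -- π_{V₀,U₁}
    (r : X →L[ℝ] X) (hr : IsIdempotentElem r)
    (hrr : LinearMap.range (r : X →ₗ[ℝ] X) = V₀) (hrk : LinearMap.ker (r : X →ₗ[ℝ] X) = U₁)
    -- π_{U₁,V₀}
    (u : X →L[ℝ] X) (hu : IsIdempotentElem u)
    (hur : LinearMap.range (u : X →ₗ[ℝ] X) = U₁) (huk : LinearMap.ker (u : X →ₗ[ℝ] X) = V₀)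
    -- the graph maps `T_{V₀} : U₀ → U₁` and `T_{V₁} : U₁ → U₀`
    (T₀ : X →L[ℝ] X) (hT₀ : ∀ x ∈ U₀, T₀ x ∈ U₁)
    (hV₀ : U₀.map ((ContinuousLinearMap.id ℝ X + T₀ : X →L[ℝ] X) : X →ₗ[ℝ] X) = V₀)
    (T₁ : X →L[ℝ] X) (hT₁ : ∀ x ∈ U₁, T₁ x ∈ U₀)
    (hV₁ : U₁.map ((ContinuousLinearMap.id ℝ X + T₁ : X →L[ℝ] X) : X →ₗ[ℝ] X) = V₁) :
    -- (1)
    r = (1 + T₀) * p ∧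
    -- (2)
    u = 1 - r ∧
    -- (3): `1 + T₁ π_{U₁,V₀}` is invertible and
    --      `π_{V₀,V₁} = (1 + T₀) π_{U₀,U₁} (1 + T₁ π_{U₁,V₀})⁻¹`
    ∃ g : X →L[ℝ] X, g * (1 + T₁ * u) = 1 ∧ (1 + T₁ * u) * g = 1 ∧
      q = (1 + T₀) * p * g := by
  -- basic pointwise facts
  have hpfix : ∀ x ∈ U₀, p x = x := by
    intro x hx
    obtain ⟨w, hw⟩ := hpr ▸ hx
    have := DFunLike.congr_fun hp w
    simpa [ContinuousLinearMap.mul_apply, ← hw] using this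
  have hpker : ∀ x ∈ U₁, p x = 0 := by
    intro x hx; rw [← hpk] at hx; exact hx
  have hufix : ∀ x ∈ U₁, u x = x := by
    intro x hx
    obtain ⟨w, hw⟩ := hur ▸ hx
    have := DFunLike.congr_fun hu w
    simpa [ContinuousLinearMap.mul_apply, ← hw] using this
  have huker : ∀ x ∈ V₀, u x = 0 := by
    intro x hx; rw [← huk] at hx; exact hx
  have hpxU0 : ∀ x, p x ∈ U₀ := fun x => hpr ▸ LinearMap.mem_range_self _ x
  have hrxV0 : ∀ x, r x ∈ V₀ := fun x => hrr ▸ LinearMap.mem_range_self _ x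
  have huxU1 : ∀ x, u x ∈ U₁ := fun x => hur ▸ LinearMap.mem_range_self _ x
  have hpcoker : ∀ x, x - p x ∈ U₁ := by
    intro x
    rw [← hpk]
    have := DFunLike.congr_fun hp x
    simpa [ContinuousLinearMap.mul_apply, LinearMap.mem_ker, map_sub, sub_eq_zero] using this.symm
  -- (1)
  have h1 : r = (1 + T₀) * p := by
    ext x
    have hz : p x + T₀ (p x) ∈ LinearMap.range (r : X →ₗ[ℝ] X) := by
      rw [hrr, ← hV₀]
      exact ⟨p x, hpxU0 x, by simp⟩
    have hxz : x - (p x + T₀ (p x)) ∈ LinearMap.ker (r : X →ₗ[ℝ] X) := by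
      rw [hrk]
      have : x - (p x + T₀ (p x)) = (x - p x) - T₀ (p x) := by abel
      rw [this]
      exact Submodule.sub_mem _ (hpcoker x) (hT₀ _ (hpxU0 x))
    have := proj_apply_eq r hr x (p x + T₀ (p x)) hz hxz
    simpa [ContinuousLinearMap.mul_apply, ContinuousLinearMap.add_apply] using this
  -- (2)
  have h2 : u = 1 - r := by
    ext x
    have hz : x - r x ∈ LinearMap.range (u : X →ₗ[ℝ] X) := by
      rw [hur, ← hrk]
      have := DFunLike.congr_fun hr x
      simpa [ContinuousLinearMap.mul_apply, LinearMap.mem_ker, map_sub, sub_eq_zero] using this.symm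
    have hxz : x - (x - r x) ∈ LinearMap.ker (u : X →ₗ[ℝ] X) := by
      rw [huk]
      have : x - (x - r x) = r x := by abel
      rw [this]; exact hrxV0 x
    have := proj_apply_eq u hu x (x - r x) hz hxz
    simpa [ContinuousLinearMap.sub_apply, ContinuousLinearMap.one_apply] using this
  refine ⟨h1, h2, ?_⟩
  have hux_eq : ∀ x, u x = x - r x := by
    intro x; rw [h2]; simp
  -- key identity: q ∘ (1 + T₁ u) = (1 + T₀) p  (= r)
  have hkey : q * (1 + T₁ * u) = r := by
    ext x
    have hz : r x ∈ LinearMap.range (q : X →ₗ[ℝ] X) := by rw [hqr]; exact hrxV0 x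
    have hxz : (x + T₁ (u x)) - r x ∈ LinearMap.ker (q : X →ₗ[ℝ] X) := by
      rw [hqk, ← hV₁]
      refine ⟨u x, huxU1 x, ?_⟩
      simp only [ContinuousLinearMap.coe_coe, ContinuousLinearMap.add_apply, ContinuousLinearMap.coe_id', id_eq]
      rw [hux_eq x]; abel
    have := proj_apply_eq q hq (x + T₁ (u x)) (r x) hz hxz
    simpa [ContinuousLinearMap.mul_apply, ContinuousLinearMap.add_apply] using this
  -- the inverse
  set g : X →L[ℝ] X := q + (1 - p) * (1 - q) with hg
  have hgy : ∀ y, g y = q y + ((y - q y) - p (y - q y)) := by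
    intro y
    simp [hg, ContinuousLinearMap.add_apply, ContinuousLinearMap.mul_apply,
      ContinuousLinearMap.sub_apply, ContinuousLinearMap.one_apply]
  have hgf : g * (1 + T₁ * u) = 1 := by
    ext x
    have hfx : (1 + T₁ * u) x = x + T₁ (u x) := by
      simp [ContinuousLinearMap.add_apply, ContinuousLinearMap.mul_apply]
    have hq_fx : q ((1 + T₁ * u) x) = r x := by
      have := DFunLike.congr_fun hkey x
      simpa [ContinuousLinearMap.mul_apply] using this
    have hdiff : (1 + T₁ * u) x - r x = u x + T₁ (u x) := by
      rw [hfx, hux_eq x]; abel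
    have hp_diff : p (u x + T₁ (u x)) = T₁ (u x) := by
      rw [map_add, hpker _ (huxU1 x), hpfix _ (hT₁ _ (huxU1 x)), zero_add]
    have : g ((1 + T₁ * u) x) = x := by
      rw [hgy, hq_fx, hdiff, hp_diff, hux_eq x]; abel
    simpa [ContinuousLinearMap.mul_apply] using this
  have hfg : (1 + T₁ * u) * g = 1 := by
    ext y
    have hv₁ : y - q y ∈ V₁ := by
      rw [← hqk]
      have := DFunLike.congr_fun hq y
      simpa [ContinuousLinearMap.mul_apply, LinearMap.mem_ker, map_sub, sub_eq_zero] using this.symm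
    obtain ⟨b, hbU₁, hb⟩ := (hV₁ ▸ hv₁ : y - q y ∈ U₁.map ((ContinuousLinearMap.id ℝ X + T₁ : X →L[ℝ] X) : X →ₗ[ℝ] X))
    simp only [ContinuousLinearMap.coe_coe, ContinuousLinearMap.add_apply, ContinuousLinearMap.coe_id', id_eq] at hb
    -- `hb : b + T₁ b = y - q y`
    have hpv : p (y - q y) = T₁ b := by
      rw [← hb, map_add, hpker _ hbU₁, hpfix _ (hT₁ _ hbU₁), zero_add]
    have hgy' : g y = q y + b := by
      rw [hgy, hpv, ← hb]; abel
    have hugy : u (g y) = b := by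
      rw [hgy', map_add, huker _ (hqr ▸ LinearMap.mem_range_self _ y), hufix _ hbU₁, zero_add]
    have : (1 + T₁ * u) (g y) = y := by
      have h' : (1 + T₁ * u) (g y) = g y + T₁ (u (g y)) := by
        simp [ContinuousLinearMap.add_apply, ContinuousLinearMap.mul_apply]
      rw [h', hugy, hgy', add_assoc, hb]; abel
    simpa [ContinuousLinearMap.mul_apply] using this
  refine ⟨g, hgf, hfg, ?_⟩
  calc q = q * ((1 + T₁ * u) * g) := by rw [hfg, mul_one]
    _ = (q * (1 + T₁ * u)) * g := by rw [mul_assoc]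
    _ = (1 + T₀) * p * g := by rw [hkey, h1]
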